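/- arXiv:2508.14265 — 2 statements merged into one kernel-verified Lean document; each statement's English description precedes it below -/
import Mathlib

section
/- Let f : F₂^n → F₂ (n = 2m even) be bent of the form f(x,y) = x·φ(y) + h(y) with x ∈ F₂^(m-1), y ∈ F₂^(m+1), where the preimages φ⁻¹(z) are 2-dimensional affine subspaces. Suppose there exists a nonzero v ∈ F₂^(m+1) such that for every z ∈ F₂^(m-1), v lies in the direction space of the affine subspace φ⁻¹(z) (i.e., v ∈ w_z + φ⁻¹(z) for some w_z ∈ φ⁻¹(z)). Then the m-dimensional subspace V = ⟨F₂^(m-1) × {0}, (0, v)⟩ satisfies D_a D_b f = 0 for all a, b ∈ V; in particular f belongs to the completed Maiorana–McFarland class. -/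
open Finset

/-- Dot product on `F₂^k`. -/
def dotp {k : ℕ} (x y : Fin k → ZMod 2) : ZMod 2 := ∑ i, x i * y i

/-- The character `z ↦ (-1)^z`. -/
def chr (z : ZMod 2) : ℤ := (-1 : ℤ) ^ z.val

/-- Walsh–Hadamard transform of a Boolean function on `F₂^p × F₂^q`. -/
def walshP {p q : ℕ} (f : (Fin p → ZMod 2) × (Fin q → ZMod 2) → ZMod 2)
    (a : Fin p → ZMod 2) (b : Fin q → ZMod 2) : ℤ :=
  ∑ x : Fin p → ZMod 2, ∑ y : Fin q → ZMod 2, chr (f (x, y) + dotp a x + dotp b y)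

/-- `S` is a 2-dimensional affine subspace (flat) of `F₂^k`. -/
def Is2Flat {k : ℕ} (S : Set (Fin k → ZMod 2)) : Prop :=
  ∃ (c : Fin k → ZMod 2) (W : Submodule (ZMod 2) (Fin k → ZMod 2)),
    Module.finrank (ZMod 2) ↥W = 2 ∧ S = (fun w => c + w) '' (W : Set (Fin k → ZMod 2))

lemma dotp_add_left {k : ℕ} (x y z : Fin k → ZMod 2) :
    dotp (x + y) z = dotp x z + dotp y z := by
  simp [dotp, add_mul, Finset.sum_add_distrib]

lemma zmod2_cases (c : ZMod 2) : c = 0 ∨ c = 1 := by revert c; decide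

/-- if a common direction `v` lies in the direction space of every flat
`φ⁻¹(z)`, then all second-order derivatives of `f` vanish on the `m`-dimensional
subspace `⟨F₂^{m-1} × {0}, (0,v)⟩`; in particular `f ∈ M^#` (Dillon's criterion). -/
theorem common_direction_implies_MM {m : ℕ} (hm : 2 ≤ m)
    (φ : (Fin (m + 1) → ZMod 2) → (Fin (m - 1) → ZMod 2))
    (h : (Fin (m + 1) → ZMod 2) → ZMod 2)
    (f : (Fin (m - 1) → ZMod 2) × (Fin (m + 1) → ZMod 2) → ZMod 2)
    (hf : ∀ x y, f (x, y) = dotp x (φ y) + h y)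
    (hflat : ∀ a, Is2Flat {y | φ y = a})
    (hodd : ∀ a, Odd ((Finset.univ.filter fun y => φ y = a ∧ h y = 1)).card)
    (v : Fin (m + 1) → ZMod 2) (hv : v ≠ 0)
    (hdir : ∀ z : Fin (m - 1) → ZMod 2, ∃ w u, φ w = z ∧ φ u = z ∧ v = w + u) :
    Module.finrank (ZMod 2)
        ↥(Submodule.span (ZMod 2)
          ({p : (Fin (m - 1) → ZMod 2) × (Fin (m + 1) → ZMod 2) | p.2 = 0} ∪ {(0, v)})) = m ∧
      ∀ a ∈ Submodule.span (ZMod 2)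
          ({p : (Fin (m - 1) → ZMod 2) × (Fin (m + 1) → ZMod 2) | p.2 = 0} ∪ {(0, v)}),
        ∀ b ∈ Submodule.span (ZMod 2)
          ({p : (Fin (m - 1) → ZMod 2) × (Fin (m + 1) → ZMod 2) | p.2 = 0} ∪ {(0, v)}),
          ∀ p, f p + f (p + a) + f (p + b) + f (p + a + b) = 0 := by
  have hvv : v + v = 0 := by
    funext i; exact CharTwo.add_self_eq_zero (v i)
  -- key: v is a period of φ
  have hφv : ∀ y, φ (y + v) = φ y := by
    intro y
    obtain ⟨c, W, _, hS⟩ := hflat (φ y)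
    obtain ⟨w, u, hw, hu, hvw⟩ := hdir (φ y)
    have hyS : y ∈ {y' | φ y' = φ y} := rfl
    have hwS : w ∈ {y' | φ y' = φ y} := hw
    have huS : u ∈ {y' | φ y' = φ y} := hu
    rw [hS] at hyS hwS huS
    obtain ⟨y₀, hy₀, hy₀e⟩ := hyS
    obtain ⟨w₀, hw₀, hw₀e⟩ := hwS
    obtain ⟨u₀, hu₀, hu₀e⟩ := huS
    have hvW : v ∈ W := by
      have : v = w₀ + u₀ := by
        rw [hvw, ← hw₀e, ← hu₀e]
        funext i
        simp only [Pi.add_apply]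
        ring_nf
        rw [show (2 : ZMod 2) = 0 from rfl]
        ring
      rw [this]; exact W.add_mem hw₀ hu₀
    have : y + v ∈ {y' | φ y' = φ y} := by
      rw [hS]
      exact ⟨y₀ + v, W.add_mem hy₀ hvW, by rw [← hy₀e]; ring⟩
    exact this
  set G := ({p : (Fin (m - 1) → ZMod 2) × (Fin (m + 1) → ZMod 2) | p.2 = 0} ∪ {(0, v)})
  set V := Submodule.span (ZMod 2) G with hV
  -- membership characterization
  have hmem : ∀ a ∈ V, a.2 = 0 ∨ a.2 = v := by
    intro a ha
    induction ha using Submodule.span_induction with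
    | mem p hp =>
      rcases hp with hp | hp
      · exact Or.inl hp
      · right; rw [Set.mem_singleton_iff.mp hp]
    | zero => exact Or.inl rfl
    | add x y hx hy ihx ihy =>
      rcases ihx with h1 | h1 <;> rcases ihy with h2 | h2 <;>
        simp only [Prod.snd_add, h1, h2, zero_add, add_zero, hvv] <;> tauto
    | smul c x hx ihx =>
      rcases zmod2_cases c with rfl | rfl
      · left; simp
      · simpa using ihx
  constructor
  · -- dimension computation
    have hset : {p : (Fin (m - 1) → ZMod 2) × (Fin (m + 1) → ZMod 2) | p.2 = 0} =
        ↑(Submodule.fst (ZMod 2) (Fin (m - 1) → ZMod 2) (Fin (m + 1) → ZMod 2)) := by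
      ext p
      simp [Submodule.fst]
    have h0v : ((0, v) : (Fin (m - 1) → ZMod 2) × (Fin (m + 1) → ZMod 2)) ≠ 0 := by
      intro hc
      exact hv (congrArg Prod.snd hc)
    have hVeq : V = Submodule.fst (ZMod 2) (Fin (m - 1) → ZMod 2) (Fin (m + 1) → ZMod 2) ⊔
        Submodule.span (ZMod 2) {((0, v) : (Fin (m - 1) → ZMod 2) × (Fin (m + 1) → ZMod 2))} := by
      rw [hV, Submodule.span_union, hset, Submodule.span_eq]
    have hinf : Submodule.fst (ZMod 2) (Fin (m - 1) → ZMod 2) (Fin (m + 1) → ZMod 2) ⊓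
        Submodule.span (ZMod 2) {((0, v) : (Fin (m - 1) → ZMod 2) × (Fin (m + 1) → ZMod 2))} = ⊥ := by
      rw [eq_bot_iff]
      rintro x ⟨hx1, hx2⟩
      obtain ⟨c, rfl⟩ := Submodule.mem_span_singleton.mp hx2
      rcases zmod2_cases c with rfl | rfl
      · simp
      · exfalso
        apply hv
        have : ((1 : ZMod 2) • ((0, v) : (Fin (m - 1) → ZMod 2) × (Fin (m + 1) → ZMod 2))).2 = 0 :=
          hx1
        simpa using this
    have hrank1 : Module.finrank (ZMod 2)
        ↥(Submodule.fst (ZMod 2) (Fin (m - 1) → ZMod 2) (Fin (m + 1) → ZMod 2)) = m - 1 := by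
      rw [(Submodule.fstEquiv (ZMod 2) (Fin (m - 1) → ZMod 2)
        (Fin (m + 1) → ZMod 2)).finrank_eq]
      exact Module.finrank_fin_fun (ZMod 2)
    have hrank2 : Module.finrank (ZMod 2)
        ↥(Submodule.span (ZMod 2)
          {((0, v) : (Fin (m - 1) → ZMod 2) × (Fin (m + 1) → ZMod 2))}) = 1 :=
      finrank_span_singleton h0v
    have := Submodule.finrank_sup_add_finrank_inf_eq
      (Submodule.fst (ZMod 2) (Fin (m - 1) → ZMod 2) (Fin (m + 1) → ZMod 2))
      (Submodule.span (ZMod 2) {((0, v) : (Fin (m - 1) → ZMod 2) × (Fin (m + 1) → ZMod 2))})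
    rw [hinf, finrank_bot, hrank1, hrank2] at this
    rw [hVeq]
    omega
  · -- second derivatives vanish
    intro a ha b hb p
    obtain ⟨x, y⟩ := p
    obtain ⟨a1, a2⟩ := a
    obtain ⟨b1, b2⟩ := b
    have ha2 := hmem _ ha
    have hb2 := hmem _ hb
    simp only at ha2 hb2
    have key : ∀ (t : Fin (m + 1) → ZMod 2), t = 0 ∨ t = v → φ (y + t) = φ y := by
      rintro t (rfl | rfl)
      · rw [add_zero]
      · exact hφv y
    have hab : a2 + b2 = 0 ∨ a2 + b2 = v := by
      rcases ha2 with rfl | rfl <;> rcases hb2 with rfl | rfl <;>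
        simp [hvv]
    have e1 : φ (y + a2) = φ y := key _ ha2
    have e2 : φ (y + b2) = φ y := key _ hb2
    have e3 : φ (y + a2 + b2) = φ y := by rw [add_assoc]; exact key _ hab
    have hh : h y + h (y + a2) + h (y + b2) + h (y + a2 + b2) = 0 := by
      rcases ha2 with h1 | h1 <;> rcases hb2 with h2 | h2 <;> rw [h1, h2] <;>
        simp only [add_zero, zero_add, add_assoc, hvv] <;>
      · generalize h y = A
        generalize h (y + v) = B
        revert A B; decide
    show f (x, y) + f (x + a1, y + a2) + f (x + b1, y + b2) +
      f (x + a1 + b1, y + a2 + b2) = 0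
    rw [hf, hf, hf, hf, e1, e2, e3, dotp_add_left, dotp_add_left, dotp_add_left,
      dotp_add_left]
    set X := dotp x (φ y) with hX
    set A := dotp a1 (φ y) with hA
    set B := dotp b1 (φ y) with hB
    set H1 := h y with hH1
    set H2 := h (y + a2) with hH2
    set H3 := h (y + b2) with hH3
    set H4 := h (y + a2 + b2) with hH4
    clear_value X A B H1 H2 H3 H4
    clear hX hA hB hH1 hH2 hH3 hH4
    revert X A B H1 H2 H3 H4
    decide
end

section
/- Let f₁, f₂, f₃, f₄ : F₂^n → F₂ be bent functions on F₂^n (n even) and let f : F₂^n × F₂² → F₂ be their concatenation, f(x, 0,0) = f₁(x), f(x,0,1) = f₂(x), f(x,1,0) = f₃(x), f(x,1,1) = f₄(x). Then f is bent if and only if f₁* + f₂* + f₃* + f₄* = 1, where fᵢ* denotes the dual of fᵢ. -/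
open Finset

/-- Walsh–Hadamard transform of a Boolean function on `F₂^p`. -/
def walsh {p : ℕ} (f : (Fin p → ZMod 2) → ZMod 2) (a : Fin p → ZMod 2) : ℤ :=
  ∑ x : Fin p → ZMod 2, chr (f x + dotp a x)


lemma chr_add : ∀ u v : ZMod 2, chr (u + v) = chr u * chr v := by decide

lemma key : ∀ z₁ z₂ z₃ z₄ : ZMod 2,
    ((chr z₁ + chr z₂ + chr z₃ + chr z₄ = 2 ∨ chr z₁ + chr z₂ + chr z₃ + chr z₄ = -2)
      ↔ z₁ + z₂ + z₃ + z₄ = 1) := by decide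

lemma sum_pi2 {M : Type*} [AddCommMonoid M] (g : (Fin 2 → ZMod 2) → M) :
    ∑ y, g y = g ![0,0] + g ![0,1] + g ![1,0] + g ![1,1] := by
  have h : (Finset.univ : Finset (Fin 2 → ZMod 2)) = {![0,0], ![0,1], ![1,0], ![1,1]} := by
    decide
  rw [h, Finset.sum_insert (by decide), Finset.sum_insert (by decide),
    Finset.sum_insert (by decide), Finset.sum_singleton]
  abel

/-- the concatenation `f₁‖f₂‖f₃‖f₄` of four bent functions (with duals
`d₁,…,d₄`) is bent iff `d₁ + d₂ + d₃ + d₄ = 1`. -/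
theorem concat_bent_iff_duals_sum_one {k : ℕ}
    (f₁ f₂ f₃ f₄ : (Fin (2 * k) → ZMod 2) → ZMod 2)
    (d₁ d₂ d₃ d₄ : (Fin (2 * k) → ZMod 2) → ZMod 2)
    (hd₁ : ∀ w, walsh f₁ w = 2 ^ k * chr (d₁ w))
    (hd₂ : ∀ w, walsh f₂ w = 2 ^ k * chr (d₂ w))
    (hd₃ : ∀ w, walsh f₃ w = 2 ^ k * chr (d₃ w))
    (hd₄ : ∀ w, walsh f₄ w = 2 ^ k * chr (d₄ w))
    (f : (Fin (2 * k) → ZMod 2) × (Fin 2 → ZMod 2) → ZMod 2)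
    (hc₁ : ∀ x, f (x, ![0, 0]) = f₁ x)
    (hc₂ : ∀ x, f (x, ![0, 1]) = f₂ x)
    (hc₃ : ∀ x, f (x, ![1, 0]) = f₃ x)
    (hc₄ : ∀ x, f (x, ![1, 1]) = f₄ x) :
    (∀ a b, walshP f a b = 2 ^ (k + 1) ∨ walshP f a b = -(2 ^ (k + 1))) ↔
      ∀ w, d₁ w + d₂ w + d₃ w + d₄ w = 1 := by

  have h2 : (2 : ℤ) ^ k ≠ 0 := by positivity
  have hw : ∀ a b, walshP f a b =
      2 ^ k * (chr (d₁ a) + chr (d₂ a + b 1) + chr (d₃ a + b 0) + chr (d₄ a + (b 0 + b 1))) := by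
    intro a b
    have inner : ∀ (g d : (Fin (2 * k) → ZMod 2) → ZMod 2),
        (∀ w, walsh g w = 2 ^ k * chr (d w)) → ∀ c : ZMod 2,
        (∑ x : Fin (2 * k) → ZMod 2, chr (g x + dotp a x + c)) = 2 ^ k * chr (d a + c) := by
      intro g d hd c
      have h1 : ∀ x : Fin (2 * k) → ZMod 2,
          chr (g x + dotp a x + c) = chr (g x + dotp a x) * chr c := fun x => chr_add _ _
      simp_rw [h1, ← Finset.sum_mul]
      rw [show (∑ x, chr (g x + dotp a x)) = walsh g a from rfl, hd, chr_add, mul_assoc]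
    have e1 : dotp b ![0,0] = 0 := by simp [dotp, Fin.sum_univ_two]
    have e2 : dotp b ![0,1] = b 1 := by simp [dotp, Fin.sum_univ_two]
    have e3 : dotp b ![1,0] = b 0 := by simp [dotp, Fin.sum_univ_two]
    have e4 : dotp b ![1,1] = b 0 + b 1 := by simp [dotp, Fin.sum_univ_two]
    rw [walshP, Finset.sum_comm,
      sum_pi2 (fun y => ∑ x : Fin (2 * k) → ZMod 2, chr (f (x, y) + dotp a x + dotp b y))]
    simp only [e1, e2, e3, e4, hc₁, hc₂, hc₃, hc₄]
    rw [inner f₁ d₁ hd₁ 0, inner f₂ d₂ hd₂ (b 1), inner f₃ d₃ hd₃ (b 0),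
      inner f₄ d₄ hd₄ (b 0 + b 1), add_zero]
    ring
  have hpow : (2 : ℤ) ^ (k + 1) = 2 ^ k * 2 := by ring
  constructor
  · intro h w
    have h0 := h w 0
    rw [hw] at h0
    simp only [Pi.zero_apply, add_zero] at h0
    have hA : chr (d₁ w) + chr (d₂ w) + chr (d₃ w) + chr (d₄ w) = 2 ∨
        chr (d₁ w) + chr (d₂ w) + chr (d₃ w) + chr (d₄ w) = -2 := by
      rcases h0 with h0 | h0
      · left; apply mul_left_cancel₀ h2; rw [h0, hpow]
      · right; apply mul_left_cancel₀ h2; rw [h0, hpow]; ring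
    simpa using (key _ _ _ _).mp hA
  · intro h a b
    rw [hw]
    have hz : d₁ a + (d₂ a + b 1) + (d₃ a + b 0) + (d₄ a + (b 0 + b 1)) = 1 := by
      have h2z : (2 : ZMod 2) = 0 := by decide
      linear_combination (h a) + (b 0 + b 1) * h2z
    rcases (key _ _ _ _).mpr hz with hA | hA
    · left; rw [hA, hpow]
    · right; rw [hA, hpow]; ring
end
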